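/- Let n < 1 and let ν be any real number. Then for all x > 0, the integral ∫_x^∞ K_{ν+n}(t)/t^ν dt is strictly less than K_{ν+n−1}(x)/x^ν. -/

import Mathlib

open MeasureTheory Set Real
open Filter

/-- Modified Bessel function of the second kind:
`K_ν(x) = ∫_0^∞ exp(−x cosh t) cosh(ν t) dt`. -/
noncomputable def besselK (ν x : ℝ) : ℝ :=
  ∫ t in Ioi (0 : ℝ), Real.exp (-(x * Real.cosh t)) * Real.cosh (ν * t)

/-- key decay fact -/
lemma kernel_tendsto (x a : ℝ) (hx : 0 < x) :
    Tendsto (fun t => Real.exp (-(x * Real.cosh t) + a * t)) atTop (nhds 0) := by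
  have h : Tendsto (fun t : ℝ => Real.exp t ^ a * Real.exp (-(x/2) * Real.exp t)) atTop (nhds 0) :=
    (tendsto_rpow_mul_exp_neg_mul_atTop_nhds_zero a (x/2) (half_pos hx)).comp
      Real.tendsto_exp_atTop
  refine squeeze_zero' (Eventually.of_forall fun t => (Real.exp_pos _).le) ?_ h
  filter_upwards [eventually_ge_atTop (0:ℝ)] with t ht
  have hc : Real.exp t / 2 ≤ Real.cosh t := by
    rw [Real.cosh_eq]
    have := (Real.exp_pos (-t)).le
    linarith
  have : Real.exp (-(x * Real.cosh t) + a * t) ≤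
      Real.exp (a * t) * Real.exp (-(x/2) * Real.exp t) := by
    rw [Real.exp_add, mul_comm (Real.exp (-(x * Real.cosh t)))]
    refine mul_le_mul_of_nonneg_left (Real.exp_le_exp.2 ?_) (Real.exp_pos _).le
    nlinarith [Real.cosh_pos t]
  calc Real.exp (-(x * Real.cosh t) + a * t) ≤
      Real.exp (a * t) * Real.exp (-(x/2) * Real.exp t) := this
    _ = Real.exp t ^ a * Real.exp (-(x/2) * Real.exp t) := by
        rw [mul_comm a t, Real.exp_mul]

lemma kernel_integrableOn (x a : ℝ) (hx : 0 < x) :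
    IntegrableOn (fun t => Real.exp (-(x * Real.cosh t) + a * t)) (Ioi 0) := by
  refine integrable_of_isBigO_exp_neg one_pos ((Real.continuous_exp.comp (by fun_prop)).continuousOn) ?_
  rw [Asymptotics.isBigO_iff]
  refine ⟨1, ?_⟩
  have h := (kernel_tendsto x (a+1) hx).eventually (eventually_le_nhds one_pos)
  filter_upwards [h] with t ht
  rw [Real.norm_eq_abs, Real.norm_eq_abs, abs_of_pos (Real.exp_pos _), abs_of_pos (Real.exp_pos _),
    one_mul]
  calc Real.exp (-(x * Real.cosh t) + a * t)
      = Real.exp (-1 * t) * Real.exp (-(x * Real.cosh t) + (a+1) * t) := by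
        rw [← Real.exp_add]; ring_nf
    _ ≤ Real.exp (-1 * t) * 1 := by
        exact mul_le_mul_of_nonneg_left ht (Real.exp_pos _).le
    _ = Real.exp (-1 * t) := mul_one _

lemma cosh_le_exp_abs (y : ℝ) : Real.cosh y ≤ Real.exp |y| := by
  rw [← Real.cosh_abs, Real.cosh_eq]
  have h1 : Real.exp (-|y|) ≤ Real.exp |y| := Real.exp_le_exp.2 (by linarith [abs_nonneg y])
  linarith

lemma integrableOn_kernel_mul {g : ℝ → ℝ} (x a C : ℝ) (hx : 0 < x) (hg : Continuous g)
    (hb : ∀ t, 0 ≤ t → |g t| ≤ C * Real.exp (a * t)) :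
    IntegrableOn (fun t => Real.exp (-(x * Real.cosh t)) * g t) (Ioi 0) := by
  refine Integrable.mono' (((kernel_integrableOn x a hx).const_mul C))
    ((Real.continuous_exp.comp (by fun_prop)).mul hg).aestronglyMeasurable ?_
  rw [ae_restrict_iff' measurableSet_Ioi]
  refine Eventually.of_forall fun t ht => ?_
  have ht0 : (0:ℝ) ≤ t := (le_of_lt ht)
  rw [Real.norm_eq_abs, abs_mul, abs_of_pos (Real.exp_pos _), Real.exp_add]
  calc Real.exp (-(x * Real.cosh t)) * |g t|
      ≤ Real.exp (-(x * Real.cosh t)) * (C * Real.exp (a * t)) :=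
        mul_le_mul_of_nonneg_left (hb t ht0) (Real.exp_pos _).le
    _ = C * (Real.exp (-(x * Real.cosh t)) * Real.exp (a * t)) := by ring

lemma besselK_integrand_integrable (μ x : ℝ) (hx : 0 < x) :
    IntegrableOn (fun t => Real.exp (-(x * Real.cosh t)) * Real.cosh (μ * t)) (Ioi 0) := by
  refine integrableOn_kernel_mul x |μ| 1 hx (by fun_prop) fun t ht => ?_
  rw [one_mul, abs_of_pos (Real.cosh_pos _)]
  calc Real.cosh (μ * t) ≤ Real.exp |μ * t| := cosh_le_exp_abs _
    _ = Real.exp (|μ| * t) := by rw [abs_mul, abs_of_nonneg ht]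

lemma besselK_pos (μ : ℝ) {x : ℝ} (hx : 0 < x) : 0 < besselK μ x := by
  rw [besselK]
  rw [setIntegral_pos_iff_support_of_nonneg_ae]
  · have : (Function.support fun t => Real.exp (-(x * Real.cosh t)) * Real.cosh (μ * t)) = univ := by
      ext t
      simp [Function.mem_support, (Real.exp_pos (-(x * Real.cosh t))).ne', (Real.cosh_pos (μ * t)).ne']
    rw [this, univ_inter]
    simp
  · exact Eventually.of_forall fun t => (mul_pos (Real.exp_pos _) (Real.cosh_pos _)).le
  · exact besselK_integrand_integrable μ x hx

lemma cosh_mul_cosh (μ t : ℝ) :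
    Real.cosh t * Real.cosh (μ * t) =
      (Real.cosh ((μ + 1) * t) + Real.cosh ((μ - 1) * t)) / 2 := by
  have h1 := Real.cosh_add (μ * t) t
  have h2 := Real.cosh_sub (μ * t) t
  have e1 : (μ + 1) * t = μ * t + t := by ring
  have e2 : (μ - 1) * t = μ * t - t := by ring
  rw [e1, e2, h1, h2]; ring

lemma sinh_mul_sinh (μ t : ℝ) :
    Real.sinh t * Real.sinh (μ * t) =
      (Real.cosh ((μ + 1) * t) - Real.cosh ((μ - 1) * t)) / 2 := by
  have h1 := Real.cosh_add (μ * t) t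
  have h2 := Real.cosh_sub (μ * t) t
  have e1 : (μ + 1) * t = μ * t + t := by ring
  have e2 : (μ - 1) * t = μ * t - t := by ring
  rw [e1, e2, h1, h2]; ring

lemma abs_sinh_le (y : ℝ) : |Real.sinh y| ≤ Real.exp |y| := by
  have h1 : |Real.sinh y| ≤ Real.cosh y := by
    have hs := Real.cosh_sq y
    nlinarith [sq_abs (Real.sinh y), Real.cosh_pos y, abs_nonneg (Real.sinh y)]
  exact h1.trans (cosh_le_exp_abs y)

/-- differentiation under the integral sign -/
lemma besselK_hasDerivAt' (μ : ℝ) {x : ℝ} (hx : 0 < x) :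
    HasDerivAt (fun y => besselK μ y)
      (∫ t in Ioi (0:ℝ), -(Real.cosh t * (Real.exp (-(x * Real.cosh t)) * Real.cosh (μ * t)))) x := by
  have key := hasDerivAt_integral_of_dominated_loc_of_deriv_le (μ := volume.restrict (Ioi 0))
    (F := fun y t => Real.exp (-(y * Real.cosh t)) * Real.cosh (μ * t))
    (F' := fun y t => -(Real.cosh t * (Real.exp (-(y * Real.cosh t)) * Real.cosh (μ * t))))
    (bound := fun t => Real.exp (-(x/2 * Real.cosh t) + (1 + |μ|) * t))
    (x₀ := x) (s := Metric.ball x (x/2)) (Metric.ball_mem_nhds x (half_pos hx))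
    (Eventually.of_forall fun y =>
      ((Real.continuous_exp.comp (by fun_prop)).mul (by fun_prop)).aestronglyMeasurable)
    (besselK_integrand_integrable μ x hx)
    ((((Real.continuous_cosh).mul ((Real.continuous_exp.comp (by fun_prop)).mul (by fun_prop))).neg).aestronglyMeasurable)
    ?_ ((kernel_integrableOn (x/2) (1 + |μ|) (half_pos hx)))
    ?_
  · exact key.2
  · rw [ae_restrict_iff' measurableSet_Ioi]
    refine Eventually.of_forall fun t ht y hy => ?_
    have ht0 : (0:ℝ) < t := ht
    have hy2 : x/2 ≤ y := by
      have := abs_lt.1 (mem_ball_iff_norm.1 hy)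
      linarith [this.1]
    have hch := Real.cosh_pos t
    have h1 : Real.exp (-(y * Real.cosh t)) ≤ Real.exp (-(x/2 * Real.cosh t)) :=
      Real.exp_le_exp.2 (by nlinarith)
    rw [norm_neg, Real.norm_eq_abs, abs_mul, abs_mul,
      abs_of_pos (Real.cosh_pos t), abs_of_pos (Real.exp_pos _), abs_of_pos (Real.cosh_pos _)]
    show _ ≤ Real.exp (-(x/2 * Real.cosh t) + (1 + |μ|) * t)
    rw [Real.exp_add]
    have h2 : Real.cosh t * Real.cosh (μ * t) ≤ Real.exp ((1 + |μ|) * t) := by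
      have c1 : Real.cosh t ≤ Real.exp t := by
        have := cosh_le_exp_abs t; rwa [abs_of_nonneg ht0.le] at this
      have c2 : Real.cosh (μ * t) ≤ Real.exp (|μ| * t) := by
        have := cosh_le_exp_abs (μ * t)
        rwa [abs_mul, abs_of_nonneg ht0.le] at this
      calc Real.cosh t * Real.cosh (μ * t) ≤ Real.exp t * Real.exp (|μ| * t) :=
            mul_le_mul c1 c2 (Real.cosh_pos _).le (Real.exp_pos _).le
        _ = Real.exp ((1 + |μ|) * t) := by rw [← Real.exp_add]; ring_nf
    calc Real.cosh t * (Real.exp (-(y * Real.cosh t)) * Real.cosh (μ * t))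
        = Real.exp (-(y * Real.cosh t)) * (Real.cosh t * Real.cosh (μ * t)) := by ring
      _ ≤ Real.exp (-(x/2 * Real.cosh t)) * Real.exp ((1 + |μ|) * t) := by
          refine mul_le_mul h1 h2 (by positivity) (Real.exp_pos _).le
  · refine Eventually.of_forall fun t y _ => ?_
    have : HasDerivAt (fun y : ℝ => Real.exp (-(y * Real.cosh t)))
        (-Real.cosh t * Real.exp (-(y * Real.cosh t))) y := by
      have h0 : HasDerivAt (fun y : ℝ => -(y * Real.cosh t)) (-Real.cosh t) y := by
        exact (((hasDerivAt_id y).mul_const (Real.cosh t)).neg).congr_deriv (by simp)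
      simpa [mul_comm] using h0.exp
    have := this.mul_const (Real.cosh (μ * t))
    refine this.congr_deriv ?_
    ring

lemma integral_cosh_mul (μ x : ℝ) (hx : 0 < x) :
    ∫ t in Ioi (0:ℝ), Real.exp (-(x * Real.cosh t)) * (Real.cosh t * Real.cosh (μ * t)) =
      (besselK (μ + 1) x + besselK (μ - 1) x) / 2 := by
  have h1 := besselK_integrand_integrable (μ + 1) x hx
  have h2 := besselK_integrand_integrable (μ - 1) x hx
  rw [besselK, besselK, ← integral_add h1 h2, ← integral_div]
  refine setIntegral_congr_fun measurableSet_Ioi fun t _ => ?_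
  rw [cosh_mul_cosh]; ring

lemma integral_sinh_mul (μ x : ℝ) (hx : 0 < x) :
    ∫ t in Ioi (0:ℝ), Real.exp (-(x * Real.cosh t)) * (Real.sinh t * Real.sinh (μ * t)) =
      (besselK (μ + 1) x - besselK (μ - 1) x) / 2 := by
  have h1 := besselK_integrand_integrable (μ + 1) x hx
  have h2 := besselK_integrand_integrable (μ - 1) x hx
  rw [besselK, besselK, ← integral_sub h1 h2, ← integral_div]
  refine setIntegral_congr_fun measurableSet_Ioi fun t _ => ?_
  rw [sinh_mul_sinh]; ring

/-- recurrence by integration by parts -/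
lemma besselK_recurrence (μ x : ℝ) (hx : 0 < x) :
    μ * besselK μ x = x * (besselK (μ + 1) x - besselK (μ - 1) x) / 2 := by
  set F : ℝ → ℝ := fun t => Real.exp (-(x * Real.cosh t)) * Real.sinh (μ * t) with hF
  set F' : ℝ → ℝ := fun t => Real.exp (-(x * Real.cosh t)) *
      (μ * Real.cosh (μ * t) - x * (Real.sinh t * Real.sinh (μ * t))) with hF'
  have hderiv : ∀ t : ℝ, HasDerivAt F (F' t) t := by
    intro t
    have h1 : HasDerivAt (fun t : ℝ => Real.exp (-(x * Real.cosh t)))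
        (-(x * Real.sinh t) * Real.exp (-(x * Real.cosh t))) t := by
      have h0 : HasDerivAt (fun t : ℝ => -(x * Real.cosh t)) (-(x * Real.sinh t)) t :=
        (((Real.hasDerivAt_cosh t).const_mul x).neg)
      simpa [mul_comm] using h0.exp
    have h2 : HasDerivAt (fun t : ℝ => Real.sinh (μ * t)) (μ * Real.cosh (μ * t)) t := by
      simpa [mul_comm] using ((hasDerivAt_id t).const_mul μ).sinh
    have := h1.mul h2
    refine this.congr_deriv ?_
    simp only [hF']; ring
  have hint : IntegrableOn F' (Ioi 0) := by
    refine integrableOn_kernel_mul x (1 + |μ|) (|μ| + x) hx (by fun_prop) fun t ht => ?_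
    have b1 : |Real.cosh (μ * t)| ≤ Real.exp (|μ| * t) := by
      rw [abs_of_pos (Real.cosh_pos _)]
      have := cosh_le_exp_abs (μ * t); rwa [abs_mul, abs_of_nonneg ht] at this
    have b2 : |Real.sinh t * Real.sinh (μ * t)| ≤ Real.exp ((1 + |μ|) * t) := by
      rw [abs_mul]
      have s1 := abs_sinh_le t
      have s2 := abs_sinh_le (μ * t)
      rw [abs_of_nonneg ht] at s1
      rw [abs_mul, abs_of_nonneg ht] at s2
      calc |Real.sinh t| * |Real.sinh (μ * t)| ≤ Real.exp t * Real.exp (|μ| * t) :=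
            mul_le_mul s1 s2 (abs_nonneg _) (Real.exp_pos _).le
        _ = Real.exp ((1 + |μ|) * t) := by rw [← Real.exp_add]; ring_nf
    have e1 : Real.exp (|μ| * t) ≤ Real.exp ((1 + |μ|) * t) :=
      Real.exp_le_exp.2 (by nlinarith)
    calc |μ * Real.cosh (μ * t) - x * (Real.sinh t * Real.sinh (μ * t))|
        ≤ |μ| * |Real.cosh (μ * t)| + x * |Real.sinh t * Real.sinh (μ * t)| := by
          refine (abs_sub _ _).trans ?_
          rw [abs_mul, abs_mul, abs_of_pos hx]
      _ ≤ |μ| * Real.exp ((1 + |μ|) * t) + x * Real.exp ((1 + |μ|) * t) := by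
          refine add_le_add (mul_le_mul_of_nonneg_left (b1.trans e1) (abs_nonneg _))
            (mul_le_mul_of_nonneg_left b2 hx.le)
      _ = (|μ| + x) * Real.exp ((1 + |μ|) * t) := by ring
  have htend : Tendsto F atTop (nhds 0) := by
    refine squeeze_zero_norm' ?_ (kernel_tendsto x |μ| hx)
    filter_upwards [eventually_ge_atTop (0:ℝ)] with t ht
    have s2 := abs_sinh_le (μ * t)
    rw [abs_mul, abs_of_nonneg ht] at s2
    rw [Real.norm_eq_abs, hF, abs_mul, abs_of_pos (Real.exp_pos _), Real.exp_add]
    exact mul_le_mul_of_nonneg_left s2 (Real.exp_pos _).le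
  have h0 : F 0 = 0 := by simp [hF]
  have key : ∫ t in Ioi (0:ℝ), F' t = 0 - F 0 :=
    integral_Ioi_of_hasDerivAt_of_tendsto' (fun t _ => hderiv t) hint htend
  rw [h0, sub_zero] at key
  have expand : ∫ t in Ioi (0:ℝ), F' t =
      μ * besselK μ x - x * ((besselK (μ + 1) x - besselK (μ - 1) x) / 2) := by
    have i1 := besselK_integrand_integrable μ x hx
    have i2 : IntegrableOn (fun t => Real.exp (-(x * Real.cosh t)) *
        (Real.sinh t * Real.sinh (μ * t))) (Ioi 0) := by
      refine integrableOn_kernel_mul x (1 + |μ|) 1 hx (by fun_prop) fun t ht => ?_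
      rw [one_mul, abs_mul]
      have s1 := abs_sinh_le t
      have s2 := abs_sinh_le (μ * t)
      rw [abs_of_nonneg ht] at s1
      rw [abs_mul, abs_of_nonneg ht] at s2
      calc |Real.sinh t| * |Real.sinh (μ * t)| ≤ Real.exp t * Real.exp (|μ| * t) :=
            mul_le_mul s1 s2 (abs_nonneg _) (Real.exp_pos _).le
        _ = Real.exp ((1 + |μ|) * t) := by rw [← Real.exp_add]; ring_nf
    have : ∀ t, F' t = μ * (Real.exp (-(x * Real.cosh t)) * Real.cosh (μ * t)) -
        x * (Real.exp (-(x * Real.cosh t)) * (Real.sinh t * Real.sinh (μ * t))) := by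
      intro t; simp only [hF']; ring
    rw [show (fun t => F' t) = _ from funext this]
    rw [integral_sub (i1.const_mul μ) (i2.const_mul x), integral_const_mul, integral_const_mul,
      integral_sinh_mul μ x hx]
    rfl
  rw [expand] at key
  linarith

lemma besselK_hasDerivAt (μ : ℝ) {x : ℝ} (hx : 0 < x) :
    HasDerivAt (fun y => besselK μ y)
      (μ / x * besselK μ x - besselK (μ + 1) x) x := by
  have h := besselK_hasDerivAt' μ hx
  have e1 : (∫ t in Ioi (0:ℝ), -(Real.cosh t * (Real.exp (-(x * Real.cosh t)) * Real.cosh (μ * t))))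
      = -((besselK (μ + 1) x + besselK (μ - 1) x) / 2) := by
    rw [← integral_cosh_mul μ x hx, ← integral_neg]
    refine setIntegral_congr_fun measurableSet_Ioi fun t _ => ?_
    ring
  rw [e1] at h
  have hrec := besselK_recurrence μ x hx
  have : -((besselK (μ + 1) x + besselK (μ - 1) x) / 2)
      = μ / x * besselK μ x - besselK (μ + 1) x := by
    field_simp at hrec ⊢
    linarith
  rwa [this] at h

lemma besselK_continuousAt (μ : ℝ) {x : ℝ} (hx : 0 < x) :
    ContinuousAt (fun y => besselK μ y) x :=
  (besselK_hasDerivAt μ hx).continuousAt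

lemma besselK_le_exp (μ : ℝ) {t : ℝ} (ht : 1 ≤ t) :
    besselK μ t ≤ Real.exp (1 - t) * besselK μ 1 := by
  have h0 : (0:ℝ) < t := lt_of_lt_of_le one_pos ht
  rw [besselK, besselK, ← integral_const_mul]
  refine setIntegral_mono_on (besselK_integrand_integrable μ t h0)
    ((besselK_integrand_integrable μ 1 one_pos).const_mul _) measurableSet_Ioi fun s _ => ?_
  rw [← mul_assoc, ← Real.exp_add]
  refine mul_le_mul_of_nonneg_right (Real.exp_le_exp.2 ?_) (Real.cosh_pos _).le
  have := Real.one_le_cosh s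
  nlinarith

lemma integrableOn_rpow_besselK (μ b x : ℝ) (hx : 0 < x) :
    IntegrableOn (fun t => t ^ b * besselK μ t) (Ioi x) := by
  refine integrable_of_isBigO_exp_neg (b := 1/2) (by norm_num) ?_ ?_
  · intro y hy
    have hy0 : 0 < y := lt_of_lt_of_le hx hy
    exact ((Real.continuousAt_rpow_const y b (Or.inl hy0.ne')).mul
      (besselK_continuousAt μ hy0)).continuousWithinAt
  · rw [Asymptotics.isBigO_iff]
    refine ⟨1, ?_⟩
    set C := Real.exp 1 * besselK μ 1 with hC
    have h0 : Tendsto (fun t : ℝ => C * (t ^ b * Real.exp (-(1/2) * t))) atTop (nhds (C * 0)) :=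
      (tendsto_rpow_mul_exp_neg_mul_atTop_nhds_zero b (1/2) (by norm_num)).const_mul C
    rw [mul_zero] at h0
    filter_upwards [h0.eventually (eventually_le_nhds one_pos), eventually_ge_atTop (1:ℝ)]
      with t h1 ht1
    have ht0 : (0:ℝ) < t := lt_of_lt_of_le one_pos ht1
    have hKpos := besselK_pos μ ht0
    have hrp : (0:ℝ) ≤ t ^ b := (Real.rpow_pos_of_pos ht0 b).le
    rw [Real.norm_eq_abs, Real.norm_eq_abs, abs_mul, abs_of_nonneg hrp,
      abs_of_pos hKpos, abs_of_pos (Real.exp_pos _), one_mul]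
    calc t ^ b * besselK μ t ≤ t ^ b * (Real.exp (1 - t) * besselK μ 1) :=
          mul_le_mul_of_nonneg_left (besselK_le_exp μ ht1) hrp
      _ = (C * (t ^ b * Real.exp (-(1/2) * t))) * Real.exp (-(1/2) * t) := by
          rw [hC, show (1:ℝ) - t = 1 + (-(1/2) * t) + (-(1/2) * t) by ring,
            Real.exp_add, Real.exp_add]
          ring
      _ ≤ 1 * Real.exp (-(1/2) * t) := mul_le_mul_of_nonneg_right h1 (Real.exp_pos _).le
      _ = Real.exp (-(1/2) * t) := one_mul _

lemma tendsto_besselK_div_rpow (μ ν : ℝ) :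
    Tendsto (fun y => besselK μ y / y ^ ν) atTop (nhds 0) := by
  have h0 : Tendsto (fun y : ℝ => (Real.exp 1 * besselK μ 1) * (y ^ (-ν) * Real.exp (-1 * y)))
      atTop (nhds ((Real.exp 1 * besselK μ 1) * 0)) :=
    (tendsto_rpow_mul_exp_neg_mul_atTop_nhds_zero (-ν) 1 one_pos).const_mul _
  rw [mul_zero] at h0
  refine squeeze_zero' ?_ ?_ h0
  · filter_upwards [eventually_gt_atTop (0:ℝ)] with y hy
    exact (div_pos (besselK_pos μ hy) (Real.rpow_pos_of_pos hy ν)).le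
  · filter_upwards [eventually_ge_atTop (1:ℝ)] with y hy
    have hy0 : (0:ℝ) < y := lt_of_lt_of_le one_pos hy
    rw [div_le_iff₀ (Real.rpow_pos_of_pos hy0 ν)]
    have key : (Real.exp 1 * besselK μ 1) * (y ^ (-ν) * Real.exp (-1 * y)) * y ^ ν
        = Real.exp (1 - y) * besselK μ 1 := by
      rw [Real.rpow_neg hy0.le, show (1:ℝ) - y = 1 + -1 * y by ring, Real.exp_add]
      field_simp [(Real.rpow_pos_of_pos hy0 ν).ne']
    rw [key]
    exact besselK_le_exp μ hy

theorem stmt_1 (ν n : ℝ) (hn : n < 1) :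
    ∀ x : ℝ, 0 < x →
      (∫ t in Ioi x, besselK (ν + n) t / t ^ ν) < besselK (ν + n - 1) x / x ^ ν := by
  intro x hx
  set μ : ℝ := ν + n - 1 with hμ
  have hμ1 : μ + 1 = ν + n := by rw [hμ]; ring
  set f : ℝ → ℝ := fun y => besselK μ y / y ^ ν with hf
  set F' : ℝ → ℝ := fun y => ((n - 1) / y * besselK μ y - besselK (μ + 1) y) / y ^ ν with hF'
  -- derivative of f
  have hderiv : ∀ y : ℝ, 0 < y → HasDerivAt f (F' y) y := by
    intro y hy
    have hpow : HasDerivAt (fun z : ℝ => z ^ ν) (ν * y ^ (ν - 1)) y :=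
      Real.hasDerivAt_rpow_const (Or.inl hy.ne')
    have hpow_ne : y ^ ν ≠ 0 := (Real.rpow_pos_of_pos hy ν).ne'
    have h := (besselK_hasDerivAt μ hy).fun_div hpow hpow_ne
    refine h.congr_deriv ?_
    rw [hF', Real.rpow_sub hy, Real.rpow_one]
    field_simp
    ring
  -- integrability of F' on (x, ∞)
  have hF'int : IntegrableOn F' (Ioi x) := by
    have h1 := (integrableOn_rpow_besselK μ (-ν - 1) x hx).const_mul (n - 1)
    have h2 := integrableOn_rpow_besselK (μ + 1) (-ν) x hx
    refine IntegrableOn.congr_fun (h1.sub h2) (fun y hy => ?_) measurableSet_Ioi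
    have hy0 : (0:ℝ) < y := lt_trans hx hy
    have e1 : y ^ (-ν - 1) = (y ^ ν * y)⁻¹ := by
      rw [show -ν - 1 = -(ν + 1) by ring, Real.rpow_neg hy0.le, Real.rpow_add hy0,
        Real.rpow_one]
    have e2 : y ^ (-ν) = (y ^ ν)⁻¹ := by rw [Real.rpow_neg hy0.le]
    simp only [Pi.sub_apply, hF']
    rw [e1, e2]
    field_simp
  -- FTC on (x, ∞)
  have hFTC : ∫ t in Ioi x, F' t = 0 - f x :=
    integral_Ioi_of_hasDerivAt_of_tendsto
      (hderiv x hx).continuousAt.continuousWithinAt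
      (fun y hy => hderiv y (lt_trans hx hy)) hF'int (tendsto_besselK_div_rpow μ ν)
  -- the positive gap term
  set h : ℝ → ℝ := fun t => (1 - n) * (t ^ (-ν - 1) * besselK μ t) with hh
  have hhint : IntegrableOn h (Ioi x) :=
    (integrableOn_rpow_besselK μ (-ν - 1) x hx).const_mul (1 - n)
  have hhpos : ∀ t ∈ Ioi x, 0 < h t := fun t ht => by
    have ht0 : (0:ℝ) < t := lt_trans hx ht
    exact mul_pos (by linarith) (mul_pos (Real.rpow_pos_of_pos ht0 _) (besselK_pos μ ht0))
  have hnonneg : (0 : ℝ → ℝ) ≤ᶠ[ae (volume.restrict (Ioi x))] h :=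
    (ae_restrict_iff' measurableSet_Ioi).2
      (Eventually.of_forall fun t ht => (hhpos t ht).le)
  have hint_pos : 0 < ∫ t in Ioi x, h t := by
    rw [setIntegral_pos_iff_support_of_nonneg_ae hnonneg hhint]
    have hsub : Ioi x ⊆ Function.support h ∩ Ioi x := fun t ht =>
      ⟨fun hc => (hhpos t ht).ne' hc, ht⟩
    calc (0 : ENNReal) < volume (Ioi x) := by simp
      _ ≤ volume (Function.support h ∩ Ioi x) := measure_mono hsub
  -- identify the integrand
  have hgid : ∀ t ∈ Ioi x, besselK (ν + n) t / t ^ ν = -F' t - h t := by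
    intro t ht
    have ht0 : (0:ℝ) < t := lt_trans hx ht
    have e1 : t ^ (-ν - 1) = (t ^ ν * t)⁻¹ := by
      rw [show -ν - 1 = -(ν + 1) by ring, Real.rpow_neg ht0.le, Real.rpow_add ht0,
        Real.rpow_one]
    simp only [hF', hh]
    rw [← hμ1, e1]
    field_simp
    ring
  have hgint : (∫ t in Ioi x, besselK (ν + n) t / t ^ ν) =
      (∫ t in Ioi x, -F' t) - ∫ t in Ioi x, h t := by
    calc (∫ t in Ioi x, besselK (ν + n) t / t ^ ν)
        = ∫ t in Ioi x, (-F' t - h t) := setIntegral_congr_fun measurableSet_Ioi hgid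
      _ = (∫ t in Ioi x, -F' t) - ∫ t in Ioi x, h t := integral_sub hF'int.neg hhint
  rw [hgint, integral_neg, hFTC]
  have hfx : f x = besselK (ν + n - 1) x / x ^ ν := rfl
  linarith
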